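/- For every positive integer n, the following identity holds: ∑_{k=1}^{n} k · (C(n,k))² · (C(n+k,k))² · ( 1/(2k) + ∑_{i=1}^{n+k} 1/i + ∑_{i=1}^{n-k} 1/i − 2·∑_{i=1}^{k} 1/i ) = 0, where the sums of reciprocals are taken over the rationals (an empty sum being 0). -/

import Mathlib

open Polynomial Finset

namespace Beukers

/-! ### Scalar definitions -/

def Hq (m : ℕ) : ℚ := ∑ i ∈ Finset.Icc 1 m, (1:ℚ)/i
def Aq (n k : ℕ) : ℚ := ((n.choose k : ℚ) * ((n+k).choose k : ℚ))^2
def bq (n k : ℕ) : ℚ := Aq n k * (1 + 2*(k:ℚ)*(Hq (n+k) + Hq (n-k) - 2*Hq k))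
def cq (n k : ℕ) : ℚ := -(k:ℚ) * Aq n k
def Pq (n k : ℕ) : ℚ := ∏ j ∈ Icc 1 n, ((k:ℚ)+j)
def Ekv (n k : ℕ) : ℚ := (((k.factorial * (n-k).factorial : ℕ)) : ℚ)^2

/-! ### Polynomial definitions -/

noncomputable def Np (n : ℕ) : ℚ[X] := X * ∏ j ∈ Icc 1 n, (X - C (j:ℚ))^2
noncomputable def ep (n k : ℕ) : ℚ[X] := ∏ j ∈ (range (n+1)).erase k, (X + C (j:ℚ))^2
noncomputable def gp (n k : ℕ) : ℚ[X] := C (cq n k) + C (bq n k) * (X + C (k:ℚ))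

/-! ### Factorial and harmonic sum computations -/

lemma fact_prod (n k : ℕ) : k.factorial * ∏ j ∈ Icc 1 n, (k+j) = (n+k).factorial := by
  induction n with
  | zero => simp
  | succ n ih =>
    rw [Finset.prod_Icc_succ_top (by omega : 1 ≤ n+1), ← mul_assoc, ih]
    have : n + 1 + k = (n + k) + 1 := by omega
    rw [this, Nat.factorial_succ]
    ring

lemma prod_shift_nat (n k : ℕ) (hk : k ≤ n) :
    ∏ j ∈ Icc 1 n, (k+j) = (n.choose k * (n+k).choose k) * (k.factorial * (n-k).factorial) := by
  have h1 : (n+k).choose k * k.factorial * n.factorial = (n+k).factorial := by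
    have := Nat.choose_mul_factorial_mul_factorial (show k ≤ n + k by omega)
    simpa [Nat.add_sub_cancel] using this
  have h2 : n.choose k * k.factorial * (n-k).factorial = n.factorial :=
    Nat.choose_mul_factorial_mul_factorial hk
  have h3 := fact_prod n k
  have hkpos := Nat.factorial_pos k
  apply Nat.eq_of_mul_eq_mul_left hkpos
  rw [h3, ← h1, ← h2]
  ring

lemma prod_shift (n k : ℕ) (hk : k ≤ n) :
    Pq n k = ((n.choose k : ℚ) * ((n+k).choose k : ℚ)) * ((k.factorial * (n-k).factorial : ℕ) : ℚ) := by
  have h := prod_shift_nat n k hk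
  have h2 : ((∏ j ∈ Icc 1 n, (k+j) : ℕ) : ℚ)
      = (((n.choose k * (n+k).choose k) * (k.factorial * (n-k).factorial) : ℕ) : ℚ) := by
    exact_mod_cast congrArg (Nat.cast : ℕ → ℚ) h
  unfold Pq
  push_cast at h2 ⊢
  convert h2 using 2

lemma Pq_sq (n k : ℕ) (hk : k ≤ n) : (Pq n k)^2 = Aq n k * Ekv n k := by
  rw [prod_shift n k hk]
  unfold Aq Ekv
  push_cast
  ring

lemma sum_inv_shift (n k : ℕ) :
    ∑ i ∈ Icc 1 n, 1/((k:ℚ)+i) = Hq (n+k) - Hq k := by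
  induction n with
  | zero => simp [Hq]
  | succ n ih =>
    rw [Finset.sum_Icc_succ_top (by omega : 1 ≤ n+1), ih]
    have : Hq (n+1+k) = Hq (n+k) + 1/((n+k+1 : ℕ):ℚ) := by
      unfold Hq
      rw [show n+1+k = (n+k)+1 by omega, Finset.sum_Icc_succ_top (by omega : 1 ≤ n+k+1)]
    rw [this]
    push_cast
    ring

lemma erase_split (n k : ℕ) (hk : k ≤ n) :
    (Finset.range (n+1)).erase k = Finset.range k ∪ Finset.Icc (k+1) n := by
  ext a
  simp only [mem_erase, mem_range, mem_union, mem_Icc]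
  omega

lemma erase_disj (n k : ℕ) : Disjoint (Finset.range k) (Finset.Icc (k+1) n) := by
  rw [Finset.disjoint_left]
  intro a ha hb
  simp only [mem_range] at ha
  simp only [mem_Icc] at hb
  omega

lemma prodA (k : ℕ) : ∏ j ∈ range k, (-(k:ℚ)+j) = (-1)^k * (k.factorial : ℚ) := by
  have h1 : ∀ j ∈ range k, (-(k:ℚ)+j) = (-1) * ((k-j : ℕ) : ℚ) := by
    intro j hj
    simp only [mem_range] at hj
    push_cast [Nat.cast_sub hj.le]
    ring
  rw [Finset.prod_congr rfl h1, Finset.prod_mul_distrib, Finset.prod_const, card_range]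
  congr 1
  rw [← Nat.cast_prod]
  congr 1
  rw [← Finset.prod_range_reflect (fun j => k - j) k]
  rw [show k.factorial = ∏ j ∈ range k, (j+1) from (Finset.prod_range_add_one_eq_factorial k).symm]
  apply Finset.prod_congr rfl
  intro j hj
  simp only [mem_range] at hj
  omega

lemma prodB (n k : ℕ) (hk : k ≤ n) :
    ∏ j ∈ Icc (k+1) n, (-(k:ℚ)+j) = ((n-k).factorial : ℚ) := by
  have hmap : (Finset.Icc 1 (n-k)).map (addLeftEmbedding k) = Finset.Icc (k+1) n := by
    rw [Finset.map_add_left_Icc]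
    congr 1
    omega
  rw [← hmap, Finset.prod_map]
  have h1 : ∀ i ∈ Icc 1 (n-k), (-(k:ℚ) + (addLeftEmbedding k i : ℕ)) = (i:ℚ) := by
    intro i hi
    simp only [addLeftEmbedding_apply]
    push_cast
    ring
  rw [Finset.prod_congr rfl h1]
  rw [← Nat.cast_prod]
  congr 1
  rw [show Finset.Icc 1 (n-k) = Finset.Ico 1 ((n-k)+1) by rw [Finset.Ico_add_one_right_eq_Icc]]
  exact Finset.prod_Ico_id_eq_factorial (n-k)

lemma sumA (k : ℕ) : ∑ j ∈ range k, 1/(-(k:ℚ)+j) = -Hq k := by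
  have h1 : ∀ j ∈ range k, 1/(-(k:ℚ)+j) = -(1/((k-j : ℕ) : ℚ)) := by
    intro j hj
    simp only [mem_range] at hj
    have heq : (-(k:ℚ)+j) = -((k:ℚ)-(j:ℚ)) := by ring
    rw [Nat.cast_sub hj.le, heq, one_div, inv_neg, one_div]
  rw [Finset.sum_congr rfl h1, Finset.sum_neg_distrib]
  congr 1
  rw [← Finset.sum_range_reflect (fun j => 1/((k-j : ℕ) : ℚ)) k]
  unfold Hq
  rw [show Finset.Icc 1 k = Finset.Ico 1 (k+1) by rw [Finset.Ico_add_one_right_eq_Icc],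
    Finset.sum_Ico_eq_sum_range]
  simp only [Nat.add_sub_cancel]
  apply Finset.sum_congr rfl
  intro j hj
  simp only [mem_range] at hj
  have : k-(k-1-j) = 1+j := by omega
  rw [this]

lemma sumB (n k : ℕ) (hk : k ≤ n) :
    ∑ j ∈ Icc (k+1) n, 1/(-(k:ℚ)+j) = Hq (n-k) := by
  have hmap : (Finset.Icc 1 (n-k)).map (addLeftEmbedding k) = Finset.Icc (k+1) n := by
    rw [Finset.map_add_left_Icc]; congr 1; omega
  rw [← hmap, Finset.sum_map]
  unfold Hq
  apply Finset.sum_congr rfl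
  intro i hi
  simp only [addLeftEmbedding_apply]
  push_cast
  congr 1
  ring

lemma prod_erase_val (n k : ℕ) (hk : k ≤ n) :
    ∏ j ∈ (range (n+1)).erase k, (-(k:ℚ)+j)^2 = Ekv n k := by
  rw [Finset.prod_pow, erase_split n k hk, Finset.prod_union (erase_disj n k), prodA,
    prodB n k hk]
  unfold Ekv
  push_cast
  rw [mul_pow, mul_pow, ← pow_mul, show k*2 = 2*k by ring, pow_mul]
  norm_num
  ring

lemma sum_erase_val (n k : ℕ) (hk : k ≤ n) :
    ∑ j ∈ (range (n+1)).erase k, 1/(-(k:ℚ)+j) = Hq (n-k) - Hq k := by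
  rw [erase_split n k hk, Finset.sum_union (erase_disj n k), sumA, sumB n k hk]
  ring


/-! ### Polynomial tools -/

lemma derivative_finset_prod {ι : Type*} [DecidableEq ι] (s : Finset ι) (f : ι → ℚ[X]) :
    derivative (∏ i ∈ s, f i) =
      ∑ i ∈ s, (∏ j ∈ s.erase i, f j) * derivative (f i) := by
  induction s using Finset.induction with
  | empty => simp
  | @insert a s ha ih =>
    rw [Finset.prod_insert ha, derivative_mul, ih, Finset.sum_insert ha,
      Finset.erase_insert ha, Finset.mul_sum]
    congr 1
    · exact mul_comm _ _
    · apply Finset.sum_congr rfl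
      intro i hi
      have hne : i ≠ a := fun h => ha (h ▸ hi)
      rw [Finset.erase_insert_of_ne hne.symm,
        Finset.prod_insert (fun h => ha (Finset.mem_of_mem_erase h))]
      ring

lemma sq_dvd_of_root_of_deriv {p : ℚ[X]} {a : ℚ} (h1 : p.eval a = 0)
    (h2 : (derivative p).eval a = 0) : (X - C a)^2 ∣ p := by
  obtain ⟨q, hq⟩ := (dvd_iff_isRoot (p := p) (a := a)).mpr h1
  have hd : derivative p = q + (X - C a) * derivative q := by
    rw [hq, derivative_mul]
    simp [derivative_X_sub_C]
  have hqa : q.eval a = 0 := by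
    have h2' := h2
    rw [hd] at h2'
    simpa using h2'
  obtain ⟨r, hr⟩ := (dvd_iff_isRoot (p := q) (a := a)).mpr hqa
  exact ⟨r, by rw [hq, hr]; ring⟩

/-! ### Evaluations -/

lemma Np_eval (n k : ℕ) : (Np n).eval (-(k:ℚ)) = -(k:ℚ) * (Pq n k)^2 := by
  unfold Np Pq
  rw [eval_mul, eval_X, eval_prod]
  have h : ∀ j ∈ Icc 1 n, eval (-(k:ℚ)) ((X - C (j:ℚ))^2) = ((k:ℚ)+j)^2 := by
    intro j _
    rw [eval_pow, eval_sub, eval_X, eval_C]; ring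
  rw [Finset.prod_congr rfl h, Finset.prod_pow]

lemma ep_eval (n k : ℕ) (hk : k ≤ n) : (ep n k).eval (-(k:ℚ)) = Ekv n k := by
  unfold ep
  rw [eval_prod]
  rw [Finset.prod_congr rfl (fun j _ => by
    rw [eval_pow, eval_add, eval_X, eval_C] :
    ∀ j ∈ (range (n+1)).erase k, eval (-(k:ℚ)) ((X + C (j:ℚ))^2) = (-(k:ℚ)+j)^2)]
  exact prod_erase_val n k hk

lemma Np_deriv_eval (n k : ℕ) (hk : k ≤ n) :
    (derivative (Np n)).eval (-(k:ℚ)) =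
      (Pq n k)^2 * (1 + 2*(k:ℚ)*(Hq (n+k) - Hq k)) := by
  have hsum := sum_inv_shift n k
  unfold Np
  rw [derivative_mul, derivative_X, one_mul, eval_add, eval_mul, eval_X]
  have h : ∀ j ∈ Icc 1 n, eval (-(k:ℚ)) ((X - C (j:ℚ))^2) = ((k:ℚ)+j)^2 := by
    intro j _
    rw [eval_pow, eval_sub, eval_X, eval_C]; ring
  have hQ : eval (-(k:ℚ)) (∏ j ∈ Icc 1 n, (X - C (j:ℚ))^2) = (Pq n k)^2 := by
    rw [eval_prod, Finset.prod_congr rfl h, Finset.prod_pow]; rfl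
  have hQ' : eval (-(k:ℚ)) (derivative (∏ j ∈ Icc 1 n, (X - C (j:ℚ))^2)) =
      -2 * (Pq n k)^2 * (Hq (n+k) - Hq k) := by
    rw [derivative_finset_prod, eval_finset_sum]
    have hterm : ∀ i ∈ Icc 1 n,
        eval (-(k:ℚ)) ((∏ j ∈ (Icc 1 n).erase i, (X - C (j:ℚ))^2) * derivative ((X - C (i:ℚ))^2))
          = -2 * (Pq n k)^2 * (1/((k:ℚ)+i)) := by
      intro i hi
      have hi1 : 1 ≤ i := (Finset.mem_Icc.mp hi).1
      have hki : ((k:ℚ)+i) ≠ 0 := by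
        have : (1:ℚ) ≤ (i:ℚ) := by exact_mod_cast hi1
        positivity
      have hP : ((k:ℚ)+i)^2 * ∏ j ∈ (Icc 1 n).erase i, ((k:ℚ)+j)^2 = (Pq n k)^2 := by
        rw [Finset.mul_prod_erase _ (fun j : ℕ => ((k:ℚ)+j)^2) hi, Finset.prod_pow]; rfl
      have herase : eval (-(k:ℚ)) (∏ j ∈ (Icc 1 n).erase i, (X - C (j:ℚ))^2) =
          ∏ j ∈ (Icc 1 n).erase i, ((k:ℚ)+j)^2 := by
        rw [eval_prod]
        apply Finset.prod_congr rfl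
        intro j hj
        exact h j (Finset.mem_of_mem_erase hj)
      rw [eval_mul, herase, derivative_X_sub_C_sq, eval_mul, eval_C, eval_sub,
        eval_X, eval_C, mul_one_div, eq_div_iff hki]
      linear_combination (-2:ℚ) * hP
    rw [Finset.sum_congr rfl hterm, ← Finset.mul_sum, hsum]
  rw [hQ, hQ']
  ring

lemma ep_deriv_eval (n k : ℕ) (hk : k ≤ n) :
    (derivative (ep n k)).eval (-(k:ℚ)) = 2 * Ekv n k * (Hq (n-k) - Hq k) := by
  have hsum := sum_erase_val n k hk
  unfold ep
  rw [derivative_finset_prod, eval_finset_sum]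
  have h : ∀ j ∈ (range (n+1)).erase k,
      eval (-(k:ℚ)) ((X + C (j:ℚ))^2) = (-(k:ℚ)+j)^2 := by
    intro j _
    rw [eval_pow, eval_add, eval_X, eval_C]
  have hterm : ∀ i ∈ (range (n+1)).erase k,
      eval (-(k:ℚ)) ((∏ j ∈ ((range (n+1)).erase k).erase i, (X + C (j:ℚ))^2)
        * derivative ((X + C (i:ℚ))^2))
        = 2 * Ekv n k * (1/(-(k:ℚ)+i)) := by
    intro i hi
    have hik : (-(k:ℚ)+i) ≠ 0 := by
      have hne : i ≠ k := Finset.ne_of_mem_erase hi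
      intro hcon
      apply hne
      have : (i:ℚ) = (k:ℚ) := by linarith [hcon]
      exact_mod_cast this
    have hP : (-(k:ℚ)+i)^2 * ∏ j ∈ ((range (n+1)).erase k).erase i, (-(k:ℚ)+j)^2
        = Ekv n k := by
      rw [Finset.mul_prod_erase _ (fun j : ℕ => (-(k:ℚ)+j)^2) hi]
      exact prod_erase_val n k hk
    have herase : eval (-(k:ℚ)) (∏ j ∈ ((range (n+1)).erase k).erase i, (X + C (j:ℚ))^2) =
        ∏ j ∈ ((range (n+1)).erase k).erase i, (-(k:ℚ)+j)^2 := by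
      rw [eval_prod]
      apply Finset.prod_congr rfl
      intro j hj
      exact h j (Finset.mem_of_mem_erase hj)
    rw [eval_mul, herase, derivative_X_add_C_sq, eval_mul, eval_C, eval_add,
      eval_X, eval_C, mul_one_div, eq_div_iff hik]
    linear_combination (2:ℚ) * hP
  rw [Finset.sum_congr rfl hterm, ← Finset.mul_sum, hsum]

lemma gp_eval (n k : ℕ) : (gp n k).eval (-(k:ℚ)) = cq n k := by
  unfold gp
  rw [eval_add, eval_C, eval_mul, eval_C, eval_add, eval_X, eval_C]
  ring

lemma gp_deriv_eval (n k : ℕ) : (derivative (gp n k)).eval (-(k:ℚ)) = bq n k := by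
  unfold gp
  rw [derivative_add, derivative_C, derivative_mul, derivative_C, derivative_add,
    derivative_X, derivative_C]
  simp


/-! ### Degrees -/

lemma Np_monic (n : ℕ) : (Np n).Monic :=
  monic_X.mul (monic_prod_of_monic _ _ fun j _ => (monic_X_sub_C (j:ℚ)).pow 2)

lemma Np_natDegree (n : ℕ) : (Np n).natDegree = 2*n+1 := by
  unfold Np
  rw [natDegree_mul X_ne_zero
    (monic_prod_of_monic _ _ fun j _ => (monic_X_sub_C ((j:ℕ):ℚ)).pow 2).ne_zero,
    natDegree_X, natDegree_prod _ _ (fun j _ => ((monic_X_sub_C ((j:ℕ):ℚ)).pow 2).ne_zero)]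
  have : ∀ j ∈ Icc 1 n, ((X - C ((j:ℕ):ℚ))^2).natDegree = 2 := by
    intro j _
    rw [natDegree_pow, natDegree_X_sub_C]
  rw [Finset.sum_congr rfl this, Finset.sum_const, Nat.card_Icc]
  simp
  omega

lemma ep_monic (n k : ℕ) : (ep n k).Monic :=
  monic_prod_of_monic _ _ fun j _ => (monic_X_add_C (j:ℚ)).pow 2

lemma ep_natDegree (n k : ℕ) (hk : k ≤ n) : (ep n k).natDegree = 2*n := by
  unfold ep
  rw [natDegree_prod _ _ (fun j _ => ((monic_X_add_C ((j:ℕ):ℚ)).pow 2).ne_zero)]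
  have : ∀ j ∈ (range (n+1)).erase k, ((X + C ((j:ℕ):ℚ))^2).natDegree = 2 := by
    intro j _
    rw [natDegree_pow, natDegree_X_add_C]
  rw [Finset.sum_congr rfl this, Finset.sum_const,
    Finset.card_erase_of_mem (by simp; omega), card_range]
  simp
  omega

lemma gp_natDegree_le (n k : ℕ) : (gp n k).natDegree ≤ 1 := by
  unfold gp
  apply le_trans (natDegree_add_le _ _)
  simp only [natDegree_C, max_le_iff]
  constructor
  · omega
  · apply le_trans (natDegree_mul_le)
    rw [natDegree_C, natDegree_X_add_C]

/-! ### The main polynomial identity -/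

lemma main_poly (n : ℕ) : Np n = ∑ k ∈ range (n+1), gp n k * ep n k := by
  rw [← sub_eq_zero]
  set D := Np n - ∑ k ∈ range (n+1), gp n k * ep n k with hD
  have hdvd : ∀ k ∈ range (n+1), (X + C (k:ℚ))^2 ∣ D := by
    intro k hkmem
    have hk : k ≤ n := by simp only [mem_range] at hkmem; omega
    have hXk : X - C (-(k:ℚ)) = X + C (k:ℚ) := by rw [map_neg, sub_neg_eq_add]
    have hsplit : D = (Np n - gp n k * ep n k) - ∑ j ∈ (range (n+1)).erase k, gp n j * ep n j := by
      rw [hD, ← Finset.add_sum_erase _ _ hkmem]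
      ring
    rw [hsplit]
    apply dvd_sub
    · -- double root at -k
      rw [← hXk]
      apply sq_dvd_of_root_of_deriv
      · rw [eval_sub, Np_eval, eval_mul, gp_eval, ep_eval n k hk]
        have hPA := Pq_sq n k hk
        unfold cq
        linear_combination (-(k:ℚ)) * hPA
      · rw [derivative_sub, derivative_mul, eval_sub, Np_deriv_eval n k hk, eval_add,
          eval_mul, eval_mul, gp_eval, gp_deriv_eval, ep_eval n k hk, ep_deriv_eval n k hk]
        have hPA := Pq_sq n k hk
        unfold bq cq
        linear_combination (1 + 2*(k:ℚ)*(Hq (n+k) - Hq k)) * hPA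
    · apply Finset.dvd_sum
      intro j hj
      apply dvd_mul_of_dvd_right
      unfold ep
      apply Finset.dvd_prod_of_mem
      simp only [mem_erase]
      refine ⟨(Finset.ne_of_mem_erase hj).symm, ?_⟩
      simp only [mem_range] at hkmem ⊢
      omega
  have hprod : (∏ k ∈ range (n+1), (X + C (k:ℚ))^2) ∣ D := by
    apply Finset.prod_dvd_of_coprime
    · intro a ha b hb hab
      have hco : IsCoprime (X - C (-(a:ℚ))) (X - C (-(b:ℚ))) := by
        apply Polynomial.pairwise_coprime_X_sub_C (s := fun m : ℕ => -((m:ℕ):ℚ))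
        · intro x y hxy
          simp only [neg_inj, Nat.cast_inj] at hxy
          exact hxy
        · exact hab
      simp only [Function.onFun]
      have h1 : X - C (-(a:ℚ)) = X + C (a:ℚ) := by rw [map_neg, sub_neg_eq_add]
      have h2 : X - C (-(b:ℚ)) = X + C (b:ℚ) := by rw [map_neg, sub_neg_eq_add]
      rw [h1, h2] at hco
      exact hco.pow
    · exact hdvd
  by_contra hne
  have hdeg : D.natDegree < (∏ k ∈ range (n+1), (X + C (k:ℚ))^2).natDegree := by
    have h1 : (∏ k ∈ range (n+1), (X + C (k:ℚ))^2).natDegree = 2*(n+1) := by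
      rw [natDegree_prod _ _ (fun j _ => ((monic_X_add_C ((j:ℕ):ℚ)).pow 2).ne_zero)]
      have : ∀ j ∈ range (n+1), ((X + C ((j:ℕ):ℚ))^2).natDegree = 2 := by
        intro j _
        rw [natDegree_pow, natDegree_X_add_C]
      rw [Finset.sum_congr rfl this, Finset.sum_const, card_range]
      simp
      omega
    have h2 : D.natDegree ≤ 2*n+1 := by
      rw [hD]
      apply le_trans (natDegree_sub_le _ _)
      rw [max_le_iff]
      constructor
      · rw [Np_natDegree]
      · apply Polynomial.natDegree_sum_le_of_forall_le
        intro k hkmem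
        have hk : k ≤ n := by simp only [mem_range] at hkmem; omega
        apply le_trans (natDegree_mul_le)
        have := gp_natDegree_le n k
        rw [ep_natDegree n k hk]
        omega
    omega
  exact hne (Polynomial.eq_zero_of_dvd_of_natDegree_lt hprod hdeg)


/-! ### Coefficient extraction -/

lemma sum_bq (n : ℕ) : ∑ k ∈ range (n+1), bq n k = 1 := by
  have h := congrArg (fun p : ℚ[X] => p.coeff (2*n+1)) (main_poly n)
  have hL : (Np n).coeff (2*n+1) = 1 := by
    have hmc := (Np_monic n).coeff_natDegree
    rwa [Np_natDegree] at hmc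
  rw [hL, finset_sum_coeff] at h
  have hterm : ∀ k ∈ range (n+1), (gp n k * ep n k).coeff (2*n+1) = bq n k := by
    intro k hkmem
    have hk : k ≤ n := by simp only [mem_range] at hkmem; omega
    have hgp : gp n k = C (cq n k + bq n k * (k:ℚ)) + C (bq n k) * X := by
      unfold gp
      rw [C_add, C_mul]
      ring
    rw [hgp, add_mul, mul_assoc, coeff_add, coeff_C_mul, coeff_C_mul, coeff_X_mul]
    have h0 : (ep n k).coeff (2*n+1) = 0 := by
      apply coeff_eq_zero_of_natDegree_lt
      rw [ep_natDegree n k hk]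
      omega
    have h1 : (ep n k).coeff (2*n) = 1 := by
      have hmc := (ep_monic n k).coeff_natDegree
      rwa [ep_natDegree n k hk] at hmc
    rw [h0, h1]
    ring
  rw [Finset.sum_congr rfl hterm] at h
  exact h.symm

end Beukers

theorem beukers_binomial_identity (n : ℕ) (hn : 0 < n) :
    ∑ k ∈ Finset.Icc 1 n,
      (k : ℚ) * (n.choose k : ℚ) ^ 2 * ((n + k).choose k : ℚ) ^ 2 *
        (1 / (2 * (k : ℚ)) +
          (∑ i ∈ Finset.Icc 1 (n + k), (1 : ℚ) / (i : ℚ)) +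
          (∑ i ∈ Finset.Icc 1 (n - k), (1 : ℚ) / (i : ℚ)) -
          2 * ∑ i ∈ Finset.Icc 1 k, (1 : ℚ) / (i : ℚ)) = 0 := by
  have hsum := Beukers.sum_bq n
  have hsplit : Finset.range (n+1) = insert 0 (Finset.Icc 1 n) := by
    ext a
    simp only [Finset.mem_range, Finset.mem_insert, Finset.mem_Icc]
    omega
  rw [hsplit, Finset.sum_insert (by simp)] at hsum
  have hb0 : Beukers.bq n 0 = 1 := by
    unfold Beukers.bq Beukers.Aq
    simp
  rw [hb0] at hsum
  have hzero : ∑ k ∈ Finset.Icc 1 n, Beukers.bq n k = 0 := by linarith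
  have hterm : ∀ k ∈ Finset.Icc 1 n,
      (k : ℚ) * (n.choose k : ℚ) ^ 2 * ((n + k).choose k : ℚ) ^ 2 *
        (1 / (2 * (k : ℚ)) +
          (∑ i ∈ Finset.Icc 1 (n + k), (1 : ℚ) / (i : ℚ)) +
          (∑ i ∈ Finset.Icc 1 (n - k), (1 : ℚ) / (i : ℚ)) -
          2 * ∑ i ∈ Finset.Icc 1 k, (1 : ℚ) / (i : ℚ)) = Beukers.bq n k / 2 := by
    intro k hk
    have hk1 : 1 ≤ k := (Finset.mem_Icc.mp hk).1
    have hkq : (k:ℚ) ≠ 0 := Nat.cast_ne_zero.mpr (by omega)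
    unfold Beukers.bq Beukers.Aq Beukers.Hq
    field_simp
    ring
  rw [Finset.sum_congr rfl hterm, ← Finset.sum_div, hzero]
  norm_num
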